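/- If a q-gram s occurs in a string u (|u| ≥ q) with fewer than cq differences under edit distance, then s has a common subsequence of length at least q − cq with some q-gram (factor of length q) of u. -/

import Mathlib

section LevenshteinCompat

/-- Costs for the Levenshtein edit distance (as in the former `Mathlib.Data.List.EditDistance.Defs`). -/
structure Levenshtein.Cost (α β δ : Type*) where
  /-- Cost of deleting a letter. -/
  delete : α → δ
  /-- Cost of inserting a letter. -/
  insert : β → δ
  /-- Cost of substituting a letter. -/
  substitute : α → β → δ

/-- The default cost structure: each insertion, deletion or substitution of distinct letters costs 1. -/
def Levenshtein.defaultCost {α : Type*} [DecidableEq α] : Levenshtein.Cost α α ℕ where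
  delete _ := 1
  insert _ := 1
  substitute a b := if a = b then 0 else 1

/-- One step of the dynamic program for the Levenshtein distance. -/
def Levenshtein.impl {α β δ : Type*} [AddZeroClass δ] [Min δ] (C : Levenshtein.Cost α β δ)
    (xs : List α) (y : β) (d : {r : List δ // 0 < r.length}) : {r : List δ // 0 < r.length} :=
  let ⟨ds, w⟩ := d
  xs.zip (ds.zip ds.tail) |>.foldr
    (init := ⟨[ds.getLast (List.ne_nil_of_length_pos w) + C.insert y], by simp⟩)
    (fun ⟨x, d₀, d₁⟩ ⟨r, w⟩ =>
      ⟨min (C.delete x + r[0]) (min (C.insert y + d₀) (C.substitute x y + d₁)) :: r, by simp⟩)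

/-- The Levenshtein distances from each suffix of `xs` to `ys`. -/
def suffixLevenshtein {α β δ : Type*} [AddZeroClass δ] [Min δ] (C : Levenshtein.Cost α β δ)
    (xs : List α) (ys : List β) : {r : List δ // 0 < r.length} :=
  ys.foldr
    (Levenshtein.impl C xs)
    (xs.foldr (init := ⟨[0], by simp⟩) (fun a ⟨r, w⟩ => ⟨(C.delete a + r[0]) :: r, by simp⟩))

/-- The Levenshtein edit distance between two lists, with respect to the costs `C`. -/
def levenshtein {α β δ : Type*} [AddZeroClass δ] [Min δ] (C : Levenshtein.Cost α β δ)
    (xs : List α) (ys : List β) : δ :=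
  let ⟨r, w⟩ := suffixLevenshtein C xs ys
  r[0]

end LevenshteinCompat

namespace Levenshtein

variable {α β δ : Type*} [AddZeroClass δ] [Min δ] (C : Levenshtein.Cost α β δ)

@[simp]
theorem defaultCost_insert {α : Type*} [DecidableEq α] (a : α) :
    (defaultCost : Cost α α ℕ).insert a = 1 := rfl

@[simp]
theorem defaultCost_delete {α : Type*} [DecidableEq α] (a : α) :
    (defaultCost : Cost α α ℕ).delete a = 1 := rfl

@[simp]
theorem defaultCost_substitute {α : Type*} [DecidableEq α] (a b : α) :
    (defaultCost : Cost α α ℕ).substitute a b = if a = b then 0 else 1 := rfl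

theorem impl_cons {x : α} {xs : List α} {y : β} {d : δ} {ds : List δ} (w : 0 < (d :: ds).length)
    (w' : 0 < List.length ds) :
    impl C (x :: xs) y ⟨d :: ds, w⟩ =
      let ⟨r, w⟩ := impl C xs y ⟨ds, w'⟩
      ⟨min (C.delete x + r[0]) (min (C.insert y + d) (C.substitute x y + ds[0])) :: r, by simp⟩ :=
  match ds, w' with | _ :: _, _ => rfl

theorem impl_cons_fst_zero {x : α} {xs : List α} {y : β} {d : δ} {ds : List δ}
    (w : 0 < (d :: ds).length) (h) (w' : 0 < List.length ds) :
    (impl C (x :: xs) y ⟨d :: ds, w⟩).1[0]'h =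
      let ⟨r, w⟩ := impl C xs y ⟨ds, w'⟩
      min (C.delete x + r[0]) (min (C.insert y + d) (C.substitute x y + ds[0])) :=
  match ds, w' with | _ :: _, _ => rfl

theorem impl_length {xs : List α} {y : β} (d : {r : List δ // 0 < r.length})
    (w : d.1.length = xs.length + 1) :
    (impl C xs y d).1.length = xs.length + 1 := by
  induction xs generalizing d with
  | nil => rfl
  | cons x xs ih =>
    dsimp [impl]
    match d, w with
    | ⟨d₁ :: d₂ :: ds, _⟩, w =>
      dsimp
      congr 1
      exact ih ⟨d₂ :: ds, (by simp)⟩ (by simpa using w)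

end Levenshtein

open Levenshtein in
theorem suffixLevenshtein_length {α β δ : Type*} [AddZeroClass δ] [Min δ] (C : Levenshtein.Cost α β δ)
    (xs : List α) (ys : List β) :
    (suffixLevenshtein C xs ys).1.length = xs.length + 1 := by
  induction ys with
  | nil =>
    dsimp [suffixLevenshtein]
    induction xs with
    | nil => rfl
    | cons _ xs ih =>
      simp_all
  | cons y ys ih =>
    dsimp [suffixLevenshtein]
    rw [impl_length]
    exact ih

theorem suffixLevenshtein_cons₂ {α β δ : Type*} [AddZeroClass δ] [Min δ] (C : Levenshtein.Cost α β δ)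
    (xs : List α) (y : β) (ys : List β) :
    suffixLevenshtein C xs (y :: ys) = (Levenshtein.impl C xs) y (suffixLevenshtein C xs ys) :=
  rfl

theorem suffixLevenshtein_cons₁_aux {α} {x y : {r : List α // 0 < r.length}}
    (w₀ : x.1[0]'x.2 = y.1[0]'y.2) (w : x.1.tail = y.1.tail) : x = y := by
  match x, y with
  | ⟨hx :: tx, _⟩, ⟨hy :: ty, _⟩ => simp_all

open Levenshtein in
theorem suffixLevenshtein_cons₁ {α β δ : Type*} [AddZeroClass δ] [Min δ] (C : Levenshtein.Cost α β δ)
    (x : α) (xs : List α) (ys : List β) :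
    suffixLevenshtein C (x :: xs) ys =
      ⟨levenshtein C (x :: xs) ys ::
        (suffixLevenshtein C xs ys).1, by simp⟩ := by
  induction ys with
  | nil =>
    rfl
  | cons y ys ih =>
    apply suffixLevenshtein_cons₁_aux
    · rfl
    · rw [suffixLevenshtein_cons₂ C (x :: xs), ih, impl_cons]
      · rfl
      · simp [suffixLevenshtein_length]

open Levenshtein in
theorem suffixLevenshtein_cons_cons_fst_get_zero {α β δ : Type*} [AddZeroClass δ] [Min δ]
    (C : Levenshtein.Cost α β δ)
    (x : α) (xs : List α) (y : β) (ys : List β) (w) :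
    (suffixLevenshtein C (x :: xs) (y :: ys)).1[0]'w =
      let ⟨dx, _⟩ := suffixLevenshtein C xs (y :: ys)
      let ⟨dy, _⟩ := suffixLevenshtein C (x :: xs) ys
      let ⟨dxy, _⟩ := suffixLevenshtein C xs ys
      min
        (C.delete x + dx[0])
        (min
          (C.insert y + dy[0])
          (C.substitute x y + dxy[0])) := by
  conv =>
    lhs
    dsimp only [suffixLevenshtein_cons₂]
  simp only [suffixLevenshtein_cons₁]
  rw [impl_cons_fst_zero]
  rfl

@[simp]
theorem levenshtein_nil_nil {α β δ : Type*} [AddZeroClass δ] [Min δ] (C : Levenshtein.Cost α β δ) :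
    levenshtein C ([] : List α) ([] : List β) = 0 := by
  simp [levenshtein, suffixLevenshtein]

@[simp]
theorem levenshtein_nil_cons {α β δ : Type*} [AddZeroClass δ] [Min δ] (C : Levenshtein.Cost α β δ)
    (y : β) (ys : List β) :
    levenshtein C ([] : List α) (y :: ys) = levenshtein C [] ys + C.insert y := by
  have h := suffixLevenshtein_length C ([] : List α) ys
  have e1 : levenshtein C ([] : List α) (y :: ys) =
      (Levenshtein.impl C [] y (suffixLevenshtein C [] ys)).1[0]'
        (Levenshtein.impl C [] y (suffixLevenshtein C [] ys)).2 := rfl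
  have e2 : levenshtein C ([] : List α) ys =
      (suffixLevenshtein C [] ys).1[0]'(suffixLevenshtein C [] ys).2 := rfl
  rw [e1, e2]
  generalize suffixLevenshtein C [] ys = d at h ⊢
  obtain ⟨l, hl⟩ := d
  simp only [List.length_nil, zero_add] at h
  match l, h with
  | [a], _ => rfl

@[simp]
theorem levenshtein_cons_nil {α β δ : Type*} [AddZeroClass δ] [Min δ] (C : Levenshtein.Cost α β δ)
    (x : α) (xs : List α) :
    levenshtein C (x :: xs) ([] : List β) = C.delete x + levenshtein C xs [] :=
  rfl

@[simp]
theorem levenshtein_cons_cons {α β δ : Type*} [AddZeroClass δ] [Min δ] (C : Levenshtein.Cost α β δ)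
    (x : α) (xs : List α) (y : β) (ys : List β) :
    levenshtein C (x :: xs) (y :: ys) =
      min (C.delete x + levenshtein C xs (y :: ys))
        (min (C.insert y + levenshtein C (x :: xs) ys)
          (C.substitute x y + levenshtein C xs ys)) :=
  suffixLevenshtein_cons_cons_fst_get_zero ..

open Levenshtein

lemma lev_nil_left {α : Type*} [DecidableEq α] (v : List α) :
    levenshtein defaultCost ([] : List α) v = v.length := by
  induction v with
  | nil => simp
  | cons b v ih => simp [ih]

lemma lev_nil_right {α : Type*} [DecidableEq α] (s : List α) :
    levenshtein defaultCost s ([] : List α) = s.length := by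
  induction s with
  | nil => simp
  | cons a s ih => simp [ih]; omega

lemma exists_common_subseq {α : Type*} [DecidableEq α] (s v : List α) :
    ∃ w : List α, w.Sublist s ∧ w.Sublist v ∧
      s.length ≤ w.length + levenshtein defaultCost s v ∧
      v.length ≤ w.length + levenshtein defaultCost s v := by
  induction s generalizing v with
  | nil =>
    exact ⟨[], List.Sublist.refl _, List.nil_sublist _, by simp, by simp [lev_nil_left]⟩
  | cons a s ihs =>
    induction v with
    | nil =>
      exact ⟨[], List.nil_sublist _, List.Sublist.refl _, by simp [lev_nil_right], by simp⟩
    | cons b v ihv =>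
      rw [levenshtein_cons_cons]
      simp only [defaultCost_delete, defaultCost_insert]
      rcases Nat.lt_or_ge (1 + levenshtein defaultCost s (b :: v))
          (min (1 + levenshtein defaultCost (a :: s) v)
            (defaultCost.substitute a b + levenshtein defaultCost s v)) with h | h
      · -- delete branch: min = 1 + lev s (b::v)
        rw [min_eq_left h.le]
        obtain ⟨w, h1, h2, h3, h4⟩ := ihs (b :: v)
        exact ⟨w, h1.cons _, h2, by simpa using by omega, by omega⟩
      · rw [min_eq_right h]
        rcases Nat.lt_or_ge (1 + levenshtein defaultCost (a :: s) v)
            (defaultCost.substitute a b + levenshtein defaultCost s v) with h' | h'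
        · rw [min_eq_left h'.le]
          obtain ⟨w, h1, h2, h3, h4⟩ := ihv
          exact ⟨w, h1, h2.cons _, by omega, by simpa using by omega⟩
        · rw [min_eq_right h']
          obtain ⟨w, h1, h2, h3, h4⟩ := ihs v
          by_cases hab : a = b
          · subst hab
            refine ⟨a :: w, h1.cons₂ _, h2.cons₂ _, ?_, ?_⟩ <;>
              · simp only [defaultCost_substitute, if_pos rfl, zero_add, List.length_cons]
                omega
          · refine ⟨w, h1.cons _, h2.cons _, ?_, ?_⟩ <;>
              · simp only [defaultCost_substitute, if_neg hab, List.length_cons]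
                omega

lemma real_step (q n d : ℕ) (c : ℝ) (h1 : q ≤ n + d) (h2 : (d : ℝ) < c * q) :
    (q : ℝ) - c * q ≤ n := by
  have : (q : ℝ) ≤ n + d := by exact_mod_cast h1
  linarith

/-- If a `q`-gram `s` occurs in a string `u` (`|u| ≥ q`) with fewer than `c·q`
differences under edit distance, then `s` has a common subsequence of length at
least `q − c·q` with some `q`-gram (factor of length `q`) of `u`. -/
theorem qgram_common_subsequence {α : Type*} [DecidableEq α]
    (s u : List α) (q : ℕ) (c : ℝ) (hc0 : 0 < c) (hc1 : c < 1)
    (hs : s.length = q) (hu : q ≤ u.length)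
    (hocc : ∃ v : List α, v <:+: u ∧
      ((levenshtein Levenshtein.defaultCost s v : ℕ) : ℝ) < c * q) :
    ∃ v w : List α, v <:+: u ∧ v.length = q ∧
      w.Sublist s ∧ w.Sublist v ∧ (q : ℝ) - c * q ≤ w.length := by
  obtain ⟨v, hvu, hlev⟩ := hocc
  obtain ⟨w, hws, hwv, hsw, hvw⟩ := exists_common_subseq s v
  set d := levenshtein defaultCost s v with hd
  by_cases hvq : q ≤ v.length
  · -- take the first q characters of v
    have hsub : w.Sublist (v.take q ++ v.drop q) := by simpa using hwv
    obtain ⟨w1, w2, hw12, hw1, hw2⟩ := List.sublist_append_iff.mp hsub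
    have hlen2 : w2.length ≤ v.length - q := by
      simpa using hw2.length_le
    refine ⟨v.take q, w1, ((v.take_prefix q).isInfix).trans hvu, by simp [hvq], ?_, hw1, ?_⟩
    · exact ((hw12 ▸ (List.prefix_append w1 w2).sublist : w1.Sublist w)).trans hws
    · refine real_step q w1.length d c ?_ hlev
      have : w.length = w1.length + w2.length := by simp [hw12]
      omega
  · -- extend v to a factor of length q
    push_neg at hvq
    obtain ⟨x, y, rfl⟩ := hvu
    have hul : q ≤ x.length + v.length + y.length := by
      simp only [List.length_append] at hu; omega
    have hq : q ≤ w.length + d := hs ▸ hsw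
    by_cases hy : q ≤ v.length + y.length
    · refine ⟨v ++ y.take (q - v.length), w, ⟨x, y.drop (q - v.length), by simp⟩,
        by simp; omega, hws, hwv.trans (List.sublist_append_left _ _), ?_⟩
      exact real_step q w.length d c hq hlev
    · push_neg at hy
      set k := q - v.length - y.length with hk
      refine ⟨x.drop (x.length - k) ++ v ++ y, w,
        ⟨x.take (x.length - k), [], by
          simp only [List.append_nil, List.append_assoc]
          rw [← List.append_assoc, List.take_append_drop]⟩,
        by simp; omega, hws, ?_, real_step q w.length d c hq hlev⟩
      exact hwv.trans (List.IsInfix.sublist ⟨x.drop (x.length - k), y, rfl⟩)
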